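/- arXiv:0907.2059 — 3 statements merged into one kernel-verified Lean document; each statement's English description precedes it below -/
import Mathlib

section
/- The reduction relation of the calculus Fx (lambda calculus extended with raise, try, natrec, foldright, and their reduction rules) is confluent: if M →* N and M →* N', then there exists P with N →* P and N' →* P. -/
/-- Exception names (a countable set, taken to be ℕ). -/
abbrev ExnName := ℕ

/-- Terms of the calculus Fx (de Bruijn indices). -/
inductive Tm : Type
  | var : ℕ → Tm
  | lam : Tm → Tm
  | app : Tm → Tm → Tm
  | raise : ExnName → Tm
  | tryc : Tm → ExnName → Tm → Tm
  | zero : Tm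
  | succ : Tm
  | natrec : Tm
  | nil : Tm
  | cons : Tm
  | foldr : Tm
  deriving DecidableEq

namespace Tm

/-- Shifting of de Bruijn indices ≥ k. -/
def lift : ℕ → Tm → Tm
  | k, var i => if i < k then var i else var (i + 1)
  | k, lam M => lam (lift (k + 1) M)
  | k, app M N => app (lift k M) (lift k N)
  | k, tryc M e N => tryc (lift k M) e (lift k N)
  | _, raise e => raise e
  | _, zero => zero
  | _, succ => succ
  | _, natrec => natrec
  | _, nil => nil
  | _, cons => cons
  | _, foldr => foldr

/-- Capture-avoiding substitution `M[k := N]` (de Bruijn). -/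
def subst : ℕ → Tm → Tm → Tm
  | k, N, var i => if i = k then N else if k < i then var (i - 1) else var i
  | k, N, lam M => lam (subst (k + 1) (lift 0 N) M)
  | k, N, app M P => app (subst k N M) (subst k N P)
  | k, N, tryc M e P => tryc (subst k N M) e (subst k N P)
  | _, _, raise e => raise e
  | _, _, zero => zero
  | _, _, succ => succ
  | _, _, natrec => natrec
  | _, _, nil => nil
  | _, _, cons => cons
  | _, _, foldr => foldr

end Tm

open Tm

/-- Regular values of Fx. -/
inductive RegVal : Tm → Prop
  | lam (M) : RegVal (lam M)
  | zero : RegVal zero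
  | succ : RegVal succ
  | succApp (N) : RegVal (app succ N)
  | natrec : RegVal natrec
  | natrec1 (M) : RegVal (app natrec M)
  | natrec2 (M N) : RegVal (app (app natrec M) N)
  | nil : RegVal nil
  | cons : RegVal cons
  | cons1 (M) : RegVal (app cons M)
  | cons2 (M N) : RegVal (app (app cons M) N)
  | foldr : RegVal foldr
  | foldr1 (M) : RegVal (app foldr M)
  | foldr2 (M N) : RegVal (app (app foldr M) N)

/-- The notion of reduction ▷ of Fx. -/
inductive Head : Tm → Tm → Prop
  | beta (M N) : Head (app (lam M) N) (subst 0 N M)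
  | raiseApp (e M) : Head (app (raise e) M) (raise e)
  | tryCatch (e N) : Head (tryc (raise e) e N) N
  | tryOther (e e' N) : e ≠ e' → Head (tryc (raise e') e N) (raise e')
  | tryVal (V e N) : RegVal V → Head (tryc V e N) V
  | recZero (X Y) : Head (app (app (app natrec X) Y) zero) X
  | recSucc (X Y N) :
      Head (app (app (app natrec X) Y) (app succ N))
        (app (app Y N) (app (app (app natrec X) Y) N))
  | recRaise (X Y e) : Head (app (app (app natrec X) Y) (raise e)) (raise e)
  | foldNil (X Y) : Head (app (app (app foldr X) Y) nil) X
  | foldCons (X Y E L) :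
      Head (app (app (app foldr X) Y) (app (app cons E) L))
        (app (app (app Y E) L) (app (app (app foldr X) Y) L))
  | foldRaise (X Y e) : Head (app (app (app foldr X) Y) (raise e)) (raise e)

/-- One-step reduction: compatible closure of ▷. -/
inductive Red : Tm → Tm → Prop
  | head {M N} : Head M N → Red M N
  | appL {M M' N} : Red M M' → Red (app M N) (app M' N)
  | appR {M N N'} : Red N N' → Red (app M N) (app M N')
  | lam {M M'} : Red M M' → Red (lam M) (lam M')
  | tryL {M M' e N} : Red M M' → Red (tryc M e N) (tryc M' e N)
  | tryR {M e N N'} : Red N N' → Red (tryc M e N) (tryc M e N')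

/-- Many-step reduction. -/
abbrev RedStar : Tm → Tm → Prop := Relation.ReflTransGen Red

namespace Tm

theorem lift_lift (M : Tm) : ∀ {j k : ℕ}, j ≤ k →
    lift j (lift k M) = lift (k + 1) (lift j M) := by
  induction M with
  | var i =>
    intro j k h
    simp only [lift]
    split_ifs <;> simp only [lift] <;> split_ifs <;> first | rfl | omega
  | lam M ih => intro j k h; simp only [lift, ih (by omega : j + 1 ≤ k + 1)]
  | app M N ihM ihN => intro j k h; simp only [lift, ihM h, ihN h]
  | tryc M e N ihM ihN => intro j k h; simp only [lift, ihM h, ihN h]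
  | _ => intros; rfl

theorem lift_subst_le (M : Tm) : ∀ {N : Tm} {j k : ℕ}, k ≤ j →
    lift j (subst k N M) = subst k (lift j N) (lift (j + 1) M) := by
  induction M with
  | var i =>
    intro N j k h
    simp only [subst, lift]
    split_ifs <;> simp only [subst, lift] <;> split_ifs <;>
      first | rfl | omega | (congr 1; omega)
  | lam M ih =>
    intro N j k h
    simp only [subst, lift, ih (by omega : k + 1 ≤ j + 1)]
    rw [lift_lift N (Nat.zero_le j)]
  | app M P ihM ihP => intro N j k h; simp only [subst, lift, ihM h, ihP h]
  | tryc M e P ihM ihP => intro N j k h; simp only [subst, lift, ihM h, ihP h]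
  | _ => intros; rfl

theorem lift_subst_ge (M : Tm) : ∀ {N : Tm} {m n : ℕ}, m ≤ n →
    lift m (subst n N M) = subst (n + 1) (lift m N) (lift m M) := by
  induction M with
  | var i =>
    intro N m n h
    simp only [subst, lift]
    split_ifs <;> simp only [subst, lift] <;> split_ifs <;>
      first | rfl | omega | (congr 1; omega)
  | lam M ih =>
    intro N m n h
    simp only [subst, lift, ih (by omega : m + 1 ≤ n + 1)]
    rw [lift_lift N (Nat.zero_le m)]
  | app M P ihM ihP => intro N m n h; simp only [subst, lift, ihM h, ihP h]
  | tryc M e P ihM ihP => intro N m n h; simp only [subst, lift, ihM h, ihP h]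
  | _ => intros; rfl

theorem subst_lift (M : Tm) : ∀ {N : Tm} {k : ℕ}, subst k N (lift k M) = M := by
  induction M with
  | var i =>
    intro N k
    simp only [lift]
    split_ifs <;> simp only [subst] <;> split_ifs <;>
      first | rfl | omega | (congr 1; omega)
  | lam M ih => intro N k; simp only [lift, subst, ih]
  | app M P ihM ihP => intro N k; simp only [lift, subst, ihM, ihP]
  | tryc M e P ihM ihP => intro N k; simp only [lift, subst, ihM, ihP]
  | _ => intros; rfl

theorem subst_subst (A : Tm) : ∀ {B N : Tm} {i j : ℕ}, i ≤ j →
    subst j N (subst i B A) =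
      subst i (subst j N B) (subst (j + 1) (lift i N) A) := by
  induction A with
  | var t =>
    intro B N i j h
    simp only [subst]
    split_ifs <;> (try simp only [subst]) <;> (try split_ifs) <;>
      first | rfl | omega | (exfalso; omega) | (congr 1; omega) | rw [subst_lift]
  | lam A ih =>
    intro B N i j h
    simp only [subst, ih (by omega : i + 1 ≤ j + 1)]
    rw [lift_subst_ge B (Nat.zero_le j), lift_lift N (Nat.zero_le i)]
  | app A C ihA ihC => intro B N i j h; simp only [subst, ihA h, ihC h]
  | tryc A e C ihA ihC => intro B N i j h; simp only [subst, ihA h, ihC h]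
  | _ => intros; rfl

end Tm
/-- Parallel reduction. -/
inductive Par : Tm → Tm → Prop
  | var (i) : Par (var i) (var i)
  | lam {M M'} : Par M M' → Par (lam M) (lam M')
  | app {M M' N N'} : Par M M' → Par N N' → Par (app M N) (app M' N')
  | raise (e) : Par (raise e) (raise e)
  | tryc {M M' N N'} (e) : Par M M' → Par N N' →
      Par (tryc M e N) (tryc M' e N')
  | zero : Par zero zero
  | succ : Par succ succ
  | natrec : Par natrec natrec
  | nil : Par nil nil
  | cons : Par cons cons
  | foldr : Par foldr foldr
  | beta {M M' N N'} : Par M M' → Par N N' →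
      Par (app (lam M) N) (subst 0 N' M')
  | raiseApp (e M) : Par (app (raise e) M) (raise e)
  | tryCatch {N N'} (e) : Par N N' → Par (tryc (raise e) e N) N'
  | tryOther (e e' N) : e ≠ e' → Par (tryc (raise e') e N) (raise e')
  | tryVal {V V'} (e N) : RegVal V → Par V V' → Par (tryc V e N) V'
  | recZero {X X'} (Y) : Par X X' → Par (app (app (app natrec X) Y) zero) X'
  | recSucc {X X' Y Y' N N'} : Par X X' → Par Y Y' → Par N N' →
      Par (app (app (app natrec X) Y) (app succ N))
        (app (app Y' N') (app (app (app natrec X') Y') N'))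
  | recRaise (X Y e) : Par (app (app (app natrec X) Y) (raise e)) (raise e)
  | foldNil {X X'} (Y) : Par X X' → Par (app (app (app foldr X) Y) nil) X'
  | foldCons {X X' Y Y' E E' L L'} : Par X X' → Par Y Y' → Par E E' → Par L L' →
      Par (app (app (app foldr X) Y) (app (app cons E) L))
        (app (app (app Y' E') L') (app (app (app foldr X') Y') L'))
  | foldRaise (X Y e) : Par (app (app (app foldr X) Y) (raise e)) (raise e)

theorem Par.refl (M : Tm) : Par M M := by
  induction M with
  | var i => exact Par.var i
  | lam _ ih => exact Par.lam ih
  | app _ _ ih1 ih2 => exact Par.app ih1 ih2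
  | raise e => exact Par.raise e
  | tryc _ e _ ih1 ih2 => exact Par.tryc e ih1 ih2
  | zero => exact Par.zero
  | succ => exact Par.succ
  | natrec => exact Par.natrec
  | nil => exact Par.nil
  | cons => exact Par.cons
  | foldr => exact Par.foldr

theorem par_raise_inv {e T} (h : Par (raise e) T) : T = raise e := by
  cases h; rfl

theorem par_zero_inv {T} (h : Par zero T) : T = zero := by cases h; rfl
theorem par_succ_inv {T} (h : Par succ T) : T = succ := by cases h; rfl
theorem par_natrec_inv {T} (h : Par natrec T) : T = natrec := by cases h; rfl
theorem par_nil_inv {T} (h : Par nil T) : T = nil := by cases h; rfl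
theorem par_cons_inv {T} (h : Par cons T) : T = cons := by cases h; rfl
theorem par_foldr_inv {T} (h : Par foldr T) : T = foldr := by cases h; rfl

theorem par_lam_inv {M T} (h : Par (lam M) T) :
    ∃ M', T = lam M' ∧ Par M M' := by
  cases h with
  | lam h => exact ⟨_, rfl, h⟩

theorem par_succApp_inv {N T} (h : Par (app succ N) T) :
    ∃ N', T = app succ N' ∧ Par N N' := by
  cases h with
  | app h1 h2 => cases par_succ_inv h1; exact ⟨_, rfl, h2⟩

theorem par_natrec1_inv {X T} (h : Par (app natrec X) T) :
    ∃ X', T = app natrec X' ∧ Par X X' := by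
  cases h with
  | app h1 h2 => cases par_natrec_inv h1; exact ⟨_, rfl, h2⟩

theorem par_natrec2_inv {X Y T} (h : Par (app (app natrec X) Y) T) :
    ∃ X' Y', T = app (app natrec X') Y' ∧ Par X X' ∧ Par Y Y' := by
  cases h with
  | app h1 h2 =>
    obtain ⟨X', rfl, hX⟩ := par_natrec1_inv h1
    exact ⟨_, _, rfl, hX, h2⟩

theorem par_cons1_inv {X T} (h : Par (app cons X) T) :
    ∃ X', T = app cons X' ∧ Par X X' := by
  cases h with
  | app h1 h2 => cases par_cons_inv h1; exact ⟨_, rfl, h2⟩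

theorem par_cons2_inv {X Y T} (h : Par (app (app cons X) Y) T) :
    ∃ X' Y', T = app (app cons X') Y' ∧ Par X X' ∧ Par Y Y' := by
  cases h with
  | app h1 h2 =>
    obtain ⟨X', rfl, hX⟩ := par_cons1_inv h1
    exact ⟨_, _, rfl, hX, h2⟩

theorem par_foldr1_inv {X T} (h : Par (app foldr X) T) :
    ∃ X', T = app foldr X' ∧ Par X X' := by
  cases h with
  | app h1 h2 => cases par_foldr_inv h1; exact ⟨_, rfl, h2⟩

theorem par_foldr2_inv {X Y T} (h : Par (app (app foldr X) Y) T) :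
    ∃ X' Y', T = app (app foldr X') Y' ∧ Par X X' ∧ Par Y Y' := by
  cases h with
  | app h1 h2 =>
    obtain ⟨X', rfl, hX⟩ := par_foldr1_inv h1
    exact ⟨_, _, rfl, hX, h2⟩

theorem par_regval {V V'} (hV : RegVal V) (h : Par V V') : RegVal V' := by
  cases hV with
  | lam M => obtain ⟨M', rfl, _⟩ := par_lam_inv h; exact RegVal.lam _
  | zero => cases par_zero_inv h; exact RegVal.zero
  | succ => cases par_succ_inv h; exact RegVal.succ
  | succApp N => obtain ⟨N', rfl, _⟩ := par_succApp_inv h; exact RegVal.succApp _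
  | natrec => cases par_natrec_inv h; exact RegVal.natrec
  | natrec1 M => obtain ⟨M', rfl, _⟩ := par_natrec1_inv h; exact RegVal.natrec1 _
  | natrec2 M N => obtain ⟨M', N', rfl, _, _⟩ := par_natrec2_inv h; exact RegVal.natrec2 _ _
  | nil => cases par_nil_inv h; exact RegVal.nil
  | cons => cases par_cons_inv h; exact RegVal.cons
  | cons1 M => obtain ⟨M', rfl, _⟩ := par_cons1_inv h; exact RegVal.cons1 _
  | cons2 M N => obtain ⟨M', N', rfl, _, _⟩ := par_cons2_inv h; exact RegVal.cons2 _ _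
  | foldr => cases par_foldr_inv h; exact RegVal.foldr
  | foldr1 M => obtain ⟨M', rfl, _⟩ := par_foldr1_inv h; exact RegVal.foldr1 _
  | foldr2 M N => obtain ⟨M', N', rfl, _, _⟩ := par_foldr2_inv h; exact RegVal.foldr2 _ _

theorem regval_lift {V} (hV : RegVal V) (k : ℕ) : RegVal (lift k V) := by
  cases hV <;> simp only [lift] <;> constructor

theorem regval_subst {V} (hV : RegVal V) (k : ℕ) (N : Tm) :
    RegVal (subst k N V) := by
  cases hV <;> simp only [subst] <;> constructor
theorem par_lift {M M'} (h : Par M M') : ∀ k, Par (lift k M) (lift k M') := by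
  induction h with
  | var i => intro k; simp only [lift]; split_ifs <;> exact Par.var _
  | lam _ ih => intro k; exact Par.lam (ih (k + 1))
  | app _ _ ih1 ih2 => intro k; exact Par.app (ih1 k) (ih2 k)
  | raise e => intro k; exact Par.raise e
  | tryc e _ _ ih1 ih2 => intro k; exact Par.tryc e (ih1 k) (ih2 k)
  | zero => intro k; exact Par.zero
  | succ => intro k; exact Par.succ
  | natrec => intro k; exact Par.natrec
  | nil => intro k; exact Par.nil
  | cons => intro k; exact Par.cons
  | foldr => intro k; exact Par.foldr
  | beta _ _ ih1 ih2 =>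
    intro k
    simp only [lift]
    rw [lift_subst_le _ (Nat.zero_le k)]
    exact Par.beta (ih1 (k + 1)) (ih2 k)
  | raiseApp e M => intro k; exact Par.raiseApp e _
  | tryCatch e _ ih => intro k; exact Par.tryCatch e (ih k)
  | tryOther e e' N hne => intro k; exact Par.tryOther e e' _ hne
  | tryVal e N hV _ ih => intro k; exact Par.tryVal e _ (regval_lift hV k) (ih k)
  | recZero Y _ ih => intro k; exact Par.recZero _ (ih k)
  | recSucc _ _ _ ih1 ih2 ih3 => intro k; exact Par.recSucc (ih1 k) (ih2 k) (ih3 k)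
  | recRaise X Y e => intro k; exact Par.recRaise _ _ e
  | foldNil Y _ ih => intro k; exact Par.foldNil _ (ih k)
  | foldCons _ _ _ _ ih1 ih2 ih3 ih4 =>
    intro k; exact Par.foldCons (ih1 k) (ih2 k) (ih3 k) (ih4 k)
  | foldRaise X Y e => intro k; exact Par.foldRaise _ _ e

theorem par_subst {M M'} (h : Par M M') :
    ∀ {k : ℕ} {N N' : Tm}, Par N N' → Par (subst k N M) (subst k N' M') := by
  induction h with
  | var i =>
    intro k N N' hN
    simp only [subst]
    split_ifs <;> first | exact hN | exact Par.var _
  | lam _ ih => intro k N N' hN; exact Par.lam (ih (par_lift hN 0))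
  | app _ _ ih1 ih2 => intro k N N' hN; exact Par.app (ih1 hN) (ih2 hN)
  | raise e => intro k N N' hN; exact Par.raise e
  | tryc e _ _ ih1 ih2 => intro k N N' hN; exact Par.tryc e (ih1 hN) (ih2 hN)
  | zero => intros; exact Par.zero
  | succ => intros; exact Par.succ
  | natrec => intros; exact Par.natrec
  | nil => intros; exact Par.nil
  | cons => intros; exact Par.cons
  | foldr => intros; exact Par.foldr
  | beta _ _ ih1 ih2 =>
    intro k N N' hN
    simp only [subst]
    rw [subst_subst _ (Nat.zero_le k)]
    exact Par.beta (ih1 (par_lift hN 0)) (ih2 hN)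
  | raiseApp e M => intro k N N' hN; exact Par.raiseApp e _
  | tryCatch e _ ih => intro k N N' hN; exact Par.tryCatch e (ih hN)
  | tryOther e e' P hne => intro k N N' hN; exact Par.tryOther e e' _ hne
  | tryVal e P hV _ ih =>
    intro k N N' hN; exact Par.tryVal e _ (regval_subst hV k N) (ih hN)
  | recZero Y _ ih => intro k N N' hN; exact Par.recZero _ (ih hN)
  | recSucc _ _ _ ih1 ih2 ih3 =>
    intro k N N' hN; exact Par.recSucc (ih1 hN) (ih2 hN) (ih3 hN)
  | recRaise X Y e => intro k N N' hN; exact Par.recRaise _ _ e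
  | foldNil Y _ ih => intro k N N' hN; exact Par.foldNil _ (ih hN)
  | foldCons _ _ _ _ ih1 ih2 ih3 ih4 =>
    intro k N N' hN; exact Par.foldCons (ih1 hN) (ih2 hN) (ih3 hN) (ih4 hN)
  | foldRaise X Y e => intro k N N' hN; exact Par.foldRaise _ _ e
/-- Complete development. -/
def cd : Tm → Tm
  | var i => var i
  | lam M => lam (cd M)
  | raise e => raise e
  | zero => zero
  | succ => succ
  | natrec => natrec
  | nil => nil
  | cons => cons
  | foldr => foldr
  | app (lam M) N => subst 0 (cd N) (cd M)
  | app (raise e) _ => raise e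
  | app (app (app natrec X) Y) zero => cd X
  | app (app (app natrec X) Y) (app succ N) =>
      app (app (cd Y) (cd N)) (app (app (app natrec (cd X)) (cd Y)) (cd N))
  | app (app (app natrec _) _) (raise e) => raise e
  | app (app (app foldr X) _) nil => cd X
  | app (app (app foldr X) Y) (app (app cons E) L) =>
      app (app (app (cd Y) (cd E)) (cd L))
        (app (app (app foldr (cd X)) (cd Y)) (cd L))
  | app (app (app foldr _) _) (raise e) => raise e
  | app M N => app (cd M) (cd N)
  | tryc (raise e') e N => if e' = e then cd N else raise e'
  | tryc (lam M) _ _ => lam (cd M)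
  | tryc zero _ _ => zero
  | tryc succ _ _ => succ
  | tryc (app succ N) _ _ => app succ (cd N)
  | tryc natrec _ _ => natrec
  | tryc (app natrec M) _ _ => app natrec (cd M)
  | tryc (app (app natrec M) N) _ _ => app (app natrec (cd M)) (cd N)
  | tryc nil _ _ => nil
  | tryc cons _ _ => cons
  | tryc (app cons M) _ _ => app cons (cd M)
  | tryc (app (app cons M) N) _ _ => app (app cons (cd M)) (cd N)
  | tryc foldr _ _ => foldr
  | tryc (app foldr M) _ _ => app foldr (cd M)
  | tryc (app (app foldr M) N) _ _ => app (app foldr (cd M)) (cd N)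
  | tryc M e N => tryc (cd M) e (cd N)

theorem cd_regval {V : Tm} (hV : RegVal V) (e : ℕ) (N : Tm) :
    cd (tryc V e N) = cd V := by
  cases hV <;> rfl
theorem par_lam_lam {A B} (h : Par (lam A) (lam B)) : Par A B := by
  obtain ⟨C, hC, hAC⟩ := par_lam_inv h
  cases hC; exact hAC

theorem par_succApp_succApp {A B} (h : Par (app succ A) (app succ B)) :
    Par A B := by
  obtain ⟨C, hC, hAC⟩ := par_succApp_inv h
  cases hC; exact hAC

theorem par_natrec2_natrec2 {A B C D}
    (h : Par (app (app natrec A) B) (app (app natrec C) D)) :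
    Par A C ∧ Par B D := by
  obtain ⟨X', Y', heq, h1, h2⟩ := par_natrec2_inv h
  obtain ⟨rfl, rfl⟩ : C = X' ∧ D = Y' := by
    injection heq with h3 h4
    injection h3 with _ h5
    exact ⟨h5, h4⟩
  exact ⟨h1, h2⟩

theorem par_cons2_cons2 {A B C D}
    (h : Par (app (app cons A) B) (app (app cons C) D)) :
    Par A C ∧ Par B D := by
  obtain ⟨X', Y', heq, h1, h2⟩ := par_cons2_inv h
  obtain ⟨rfl, rfl⟩ : C = X' ∧ D = Y' := by
    injection heq with h3 h4
    injection h3 with _ h5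
    exact ⟨h5, h4⟩
  exact ⟨h1, h2⟩

theorem par_foldr2_foldr2 {A B C D}
    (h : Par (app (app foldr A) B) (app (app foldr C) D)) :
    Par A C ∧ Par B D := by
  obtain ⟨X', Y', heq, h1, h2⟩ := par_foldr2_inv h
  obtain ⟨rfl, rfl⟩ : C = X' ∧ D = Y' := by
    injection heq with h3 h4
    injection h3 with _ h5
    exact ⟨h5, h4⟩
  exact ⟨h1, h2⟩

theorem cd_try_raise_eq (e N) : cd (tryc (raise e) e N) = cd N := if_pos rfl

theorem cd_try_raise_ne {e e'} (h : e' ≠ e) (N) :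
    cd (tryc (raise e') e N) = raise e' := if_neg h
theorem par_triangle {M N : Tm} (h : Par M N) : Par N (cd M) := by
  induction h with
  | var i => exact Par.var i
  | lam _ ih => exact Par.lam ih
  | raise e => exact Par.raise e
  | zero => exact Par.zero
  | succ => exact Par.succ
  | natrec => exact Par.natrec
  | nil => exact Par.nil
  | cons => exact Par.cons
  | foldr => exact Par.foldr
  | beta _ _ ihA ihB => exact par_subst ihA ihB
  | raiseApp e M => exact Par.raise e
  | tryCatch e _ ih => rw [cd_try_raise_eq]; exact ih
  | tryOther e e' N hne => rw [cd_try_raise_ne (Ne.symm hne)]; exact Par.raise e'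
  | tryVal e N hV _ ih => rw [cd_regval hV]; exact ih
  | recZero Y _ ih => exact ih
  | recSucc _ _ _ ihX ihY ihK =>
    exact Par.app (Par.app ihY ihK)
      (Par.app (Par.app (Par.app Par.natrec ihX) ihY) ihK)
  | recRaise X Y e => exact Par.raise e
  | foldNil Y _ ih => exact ih
  | foldCons _ _ _ _ ihX ihY ihE ihL =>
    exact Par.app (Par.app (Par.app ihY ihE) ihL)
      (Par.app (Par.app (Par.app Par.foldr ihX) ihY) ihL)
  | foldRaise X Y e => exact Par.raise e
  | @tryc M M' N N' e hM hN ih1 ih2 =>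
    cases M
    case raise e' =>
      cases par_raise_inv hM
      by_cases he : e' = e
      · subst he; rw [cd_try_raise_eq]; exact Par.tryCatch e' ih2
      · rw [cd_try_raise_ne he]; exact Par.tryOther e e' N' (Ne.symm he)
    case app M₁ M₂ =>
      cases M₁
      case app f g =>
        cases f
        all_goals first
          | exact Par.tryVal e _ (par_regval (by constructor) hM) ih1
          | exact Par.tryc e ih1 ih2
      all_goals first
        | exact Par.tryVal e _ (par_regval (by constructor) hM) ih1
        | exact Par.tryc e ih1 ih2
    all_goals first
      | exact Par.tryVal e _ (par_regval (by constructor) hM) ih1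
      | exact Par.tryc e ih1 ih2
  | @app M M' N N' hM hN ih1 ih2 =>
    cases M
    case lam B =>
      obtain ⟨B', rfl, hB⟩ := par_lam_inv hM
      exact Par.beta (par_lam_lam ih1) ih2
    case raise e =>
      cases par_raise_inv hM
      exact Par.raiseApp e N'
    case app M₁ M₂ =>
      cases M₁
      case app f g =>
        cases f
        case natrec =>
          obtain ⟨X', Y', rfl, hX, hY⟩ := par_natrec2_inv hM
          obtain ⟨hX', hY'⟩ := par_natrec2_natrec2 ih1
          cases N
          case zero => cases par_zero_inv hN; exact Par.recZero _ hX'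
          case raise e => cases par_raise_inv hN; exact Par.recRaise _ _ e
          case app P Q =>
            cases P
            case succ =>
              obtain ⟨K', rfl, hK⟩ := par_succApp_inv hN
              exact Par.recSucc hX' hY' (par_succApp_succApp ih2)
            all_goals exact Par.app ih1 ih2
          all_goals exact Par.app ih1 ih2
        case foldr =>
          obtain ⟨X', Y', rfl, hX, hY⟩ := par_foldr2_inv hM
          obtain ⟨hX', hY'⟩ := par_foldr2_foldr2 ih1
          cases N
          case nil => cases par_nil_inv hN; exact Par.foldNil _ hX'
          case raise e => cases par_raise_inv hN; exact Par.foldRaise _ _ e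
          case app P Q =>
            cases P
            case app c E =>
              cases c
              case cons =>
                obtain ⟨E', L', rfl, hE, hL⟩ := par_cons2_inv hN
                obtain ⟨hE', hL'⟩ := par_cons2_cons2 ih2
                exact Par.foldCons hX' hY' hE' hL'
              all_goals exact Par.app ih1 ih2
            all_goals exact Par.app ih1 ih2
          all_goals exact Par.app ih1 ih2
        all_goals exact Par.app ih1 ih2
      all_goals exact Par.app ih1 ih2
    all_goals exact Par.app ih1 ih2
theorem red_par {M N} (h : Red M N) : Par M N := by
  induction h with
  | head hh =>
    cases hh <;>
      first
        | exact Par.beta (Par.refl _) (Par.refl _)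
        | exact Par.raiseApp _ _
        | exact Par.tryCatch _ (Par.refl _)
        | exact Par.tryOther _ _ _ (by assumption)
        | exact Par.tryVal _ _ (by assumption) (Par.refl _)
        | exact Par.recZero _ (Par.refl _)
        | exact Par.recSucc (Par.refl _) (Par.refl _) (Par.refl _)
        | exact Par.recRaise _ _ _
        | exact Par.foldNil _ (Par.refl _)
        | exact Par.foldCons (Par.refl _) (Par.refl _) (Par.refl _) (Par.refl _)
        | exact Par.foldRaise _ _ _
  | appL _ ih => exact Par.app ih (Par.refl _)
  | appR _ ih => exact Par.app (Par.refl _) ih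
  | lam _ ih => exact Par.lam ih
  | tryL _ ih => exact Par.tryc _ ih (Par.refl _)
  | tryR _ ih => exact Par.tryc _ (Par.refl _) ih

theorem redstar_app {M M' N N'} (h1 : RedStar M M') (h2 : RedStar N N') :
    RedStar (app M N) (app M' N') := by
  refine Relation.ReflTransGen.trans
    (Relation.ReflTransGen.lift (fun X => app X N) (fun _ _ h => Red.appL h) _ _ h1)
    (Relation.ReflTransGen.lift (fun X => app M' X) (fun _ _ h => Red.appR h) _ _ h2)

theorem redstar_lam {M M'} (h : RedStar M M') : RedStar (lam M) (lam M') :=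
  Relation.ReflTransGen.lift lam (fun _ _ h => Red.lam h) _ _ h

theorem redstar_tryc {M M' N N'} (e) (h1 : RedStar M M') (h2 : RedStar N N') :
    RedStar (tryc M e N) (tryc M' e N') := by
  refine Relation.ReflTransGen.trans
    (Relation.ReflTransGen.lift (fun X => tryc X e N) (fun _ _ h => Red.tryL h) _ _ h1)
    (Relation.ReflTransGen.lift (fun X => tryc M' e X) (fun _ _ h => Red.tryR h) _ _ h2)

theorem par_redstar {M N} (h : Par M N) : RedStar M N := by
  induction h with
  | var i => exact Relation.ReflTransGen.refl
  | lam _ ih => exact redstar_lam ih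
  | app _ _ ih1 ih2 => exact redstar_app ih1 ih2
  | raise e => exact Relation.ReflTransGen.refl
  | tryc e _ _ ih1 ih2 => exact redstar_tryc e ih1 ih2
  | zero => exact Relation.ReflTransGen.refl
  | succ => exact Relation.ReflTransGen.refl
  | natrec => exact Relation.ReflTransGen.refl
  | nil => exact Relation.ReflTransGen.refl
  | cons => exact Relation.ReflTransGen.refl
  | foldr => exact Relation.ReflTransGen.refl
  | beta _ _ ih1 ih2 =>
    exact Relation.ReflTransGen.trans
      (redstar_app (redstar_lam ih1) ih2)
      (Relation.ReflTransGen.single (Red.head (Head.beta _ _)))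
  | raiseApp e M =>
    exact Relation.ReflTransGen.single (Red.head (Head.raiseApp e M))
  | tryCatch e _ ih =>
    exact Relation.ReflTransGen.head (Red.head (Head.tryCatch e _)) ih
  | tryOther e e' N hne =>
    exact Relation.ReflTransGen.single (Red.head (Head.tryOther e e' N hne))
  | tryVal e N hV _ ih =>
    exact Relation.ReflTransGen.head (Red.head (Head.tryVal _ e N hV)) ih
  | recZero Y _ ih =>
    exact Relation.ReflTransGen.head (Red.head (Head.recZero _ _)) ih
  | recSucc _ _ _ ih1 ih2 ih3 =>
    refine Relation.ReflTransGen.trans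
      (redstar_app (redstar_app (redstar_app .refl ih1) ih2)
        (redstar_app .refl ih3)) ?_
    exact Relation.ReflTransGen.single (Red.head (Head.recSucc _ _ _))
  | recRaise X Y e =>
    exact Relation.ReflTransGen.single (Red.head (Head.recRaise X Y e))
  | foldNil Y _ ih =>
    exact Relation.ReflTransGen.head (Red.head (Head.foldNil _ _)) ih
  | foldCons _ _ _ _ ih1 ih2 ih3 ih4 =>
    refine Relation.ReflTransGen.trans
      (redstar_app (redstar_app (redstar_app .refl ih1) ih2)
        (redstar_app (redstar_app .refl ih3) ih4)) ?_
    exact Relation.ReflTransGen.single (Red.head (Head.foldCons _ _ _ _))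
  | foldRaise X Y e =>
    exact Relation.ReflTransGen.single (Red.head (Head.foldRaise X Y e))

theorem par_diamond {M N N'} (h1 : Par M N) (h2 : Par M N') :
    ∃ P, Par N P ∧ Par N' P :=
  ⟨cd M, par_triangle h1, par_triangle h2⟩

theorem parstar_strip {M N N'} (h1 : Par M N)
    (h2 : Relation.ReflTransGen Par M N') :
    ∃ P, Relation.ReflTransGen Par N P ∧ Par N' P := by
  induction h2 with
  | refl => exact ⟨N, Relation.ReflTransGen.refl, h1⟩
  | tail _ hbc ih =>
    obtain ⟨P, hNP, hP⟩ := ih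
    obtain ⟨Q, hPQ, hQ⟩ := par_diamond hP hbc
    exact ⟨Q, hNP.tail hPQ, hQ⟩

theorem parstar_confluent {M N N'} (h1 : Relation.ReflTransGen Par M N)
    (h2 : Relation.ReflTransGen Par M N') :
    ∃ P, Relation.ReflTransGen Par N P ∧ Relation.ReflTransGen Par N' P := by
  induction h1 with
  | refl => exact ⟨N', h2, Relation.ReflTransGen.refl⟩
  | tail _ hbc ih =>
    obtain ⟨P, hNP, hP⟩ := ih
    obtain ⟨Q, hPQ, hQ⟩ := parstar_strip hbc hNP
    exact ⟨Q, hPQ, hP.tail hQ⟩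

theorem redstar_parstar {A B} (h : RedStar A B) :
    Relation.ReflTransGen Par A B := by
  induction h with
  | refl => exact .refl
  | tail _ hbc ih => exact ih.tail (red_par hbc)

theorem parstar_redstar {A B} (h : Relation.ReflTransGen Par A B) :
    RedStar A B := by
  induction h with
  | refl => exact .refl
  | tail _ hbc ih => exact ih.trans (par_redstar hbc)

theorem fx_confluence (M N N' : Tm) (h1 : RedStar M N) (h2 : RedStar M N') :
    ∃ P, RedStar N P ∧ RedStar N' P := by
  obtain ⟨P, hNP, hN'P⟩ :=
    parstar_confluent (redstar_parstar h1) (redstar_parstar h2)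
  exact ⟨P, parstar_redstar hNP, parstar_redstar hN'P⟩
end

section
/- Inversion of application typing in Fx: if Γ ⊢ M N : A, then there exists a type C such that Γ ⊢ M : C → A and Γ ⊢ N : C. -/
open Tm

/-- Types of Fx (de Bruijn type variables); `union A Δ` is `A∪{Δ}`,
`corrupt Δ A` is the corruption `{Δ}A`. -/
inductive Ty : Type
  | tvar : ℕ → Ty
  | nat : Ty
  | list : Ty → Ty
  | arrow : Ty → Ty → Ty
  | all : Ty → Ty
  | union : Ty → Finset ExnName → Ty
  | corrupt : Finset ExnName → Ty → Ty
  deriving DecidableEq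

namespace Ty

/-- Shifting of de Bruijn type variables ≥ k. -/
def lift : ℕ → Ty → Ty
  | k, tvar i => if i < k then tvar i else tvar (i + 1)
  | _, nat => nat
  | k, list A => list (lift k A)
  | k, arrow A B => arrow (lift k A) (lift k B)
  | k, all A => all (lift (k + 1) A)
  | k, union A Δ => union (lift k A) Δ
  | k, corrupt Δ A => corrupt Δ (lift k A)

/-- Substitution `A[k := B]` on types (de Bruijn). -/
def subst : ℕ → Ty → Ty → Ty
  | k, B, tvar i => if i = k then B else if k < i then tvar (i - 1) else tvar i
  | _, _, nat => nat
  | k, B, list A => list (subst k B A)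
  | k, B, arrow A C => arrow (subst k B A) (subst k B C)
  | k, B, all A => all (subst (k + 1) (lift 0 B) A)
  | k, B, union A Δ => union (subst k B A) Δ
  | k, B, corrupt Δ A => corrupt Δ (subst k B A)

end Ty

open Ty

/-- The subtyping relation ⊑ of Fx. -/
inductive Subty : Ty → Ty → Prop
  | refl (A) : Subty A A
  | trans {A B C} : Subty A B → Subty B C → Subty A C
  | arrow {A A' B B'} : Subty A' A → Subty B B' → Subty (arrow A B) (arrow A' B')
  | gen {A B} : Subty (Ty.lift 0 A) B → Subty A (all B)
  | inst (A B) : Subty (all A) (Ty.subst 0 B A)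
  | distr (A B) : Subty (all (arrow (Ty.lift 0 A) B)) (arrow A (all B))
  | uni (A Δ) : Subty A (union A Δ)
  | corrupt (A Δ) : Subty (union A Δ) (corrupt Δ A)
  | noexc (A) : Subty (corrupt ∅ A) A
  | uctx {A B} (Δ) : Subty A B → Subty (union A Δ) (union B Δ)
  | arru (A B Δ) : Subty (union (arrow A B) Δ) (arrow A (union B Δ))
  | fallc (A Δ) : Subty (all (corrupt Δ A)) (corrupt Δ (all A))
  | fallu (A Δ) : Subty (all (union A Δ)) (union (all A) Δ)
  | lcor (A Δ) : Subty (list (corrupt Δ A)) (corrupt Δ (list A))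
  | lctx {A B} : Subty A B → Subty (list A) (list B)
  | uuL (A Δ Δ') : Subty (union (union A Δ) Δ') (union A (Δ ∪ Δ'))
  | uuR (A Δ Δ') : Subty (union A (Δ ∪ Δ')) (union (union A Δ) Δ')
  | ccL (A Δ Δ') : Subty (corrupt Δ' (corrupt Δ A)) (corrupt (Δ ∪ Δ') A)
  | ccR (A Δ Δ') : Subty (corrupt (Δ ∪ Δ') A) (corrupt Δ' (corrupt Δ A))
  | ucL (A Δ Δ') : Subty (corrupt Δ' (union A Δ)) (union (corrupt Δ' A) Δ)
  | ucR (A Δ Δ') : Subty (union (corrupt Δ' A) Δ) (corrupt Δ' (union A Δ))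
  | arrcL (A B Δ) : Subty (corrupt Δ (arrow A B)) (arrow (corrupt Δ A) (corrupt Δ B))
  | arrcR (A B Δ) : Subty (arrow (corrupt Δ A) (corrupt Δ B)) (corrupt Δ (arrow A B))

open Ty

/-- Type scheme of the recursion operator `natrec` (`α` is `tvar 0`). -/
def recTy (Δ Δ' : Finset ExnName) : Ty :=
  Ty.all (Ty.arrow (Ty.union (tvar 0) Δ)
    (Ty.arrow (Ty.arrow (Ty.corrupt Δ Ty.nat)
        (Ty.arrow (Ty.union (tvar 0) Δ) (Ty.union (tvar 0) Δ)))
      (Ty.arrow (Ty.union (Ty.corrupt Δ Ty.nat) Δ')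
        (Ty.union (tvar 0) (Δ ∪ Δ')))))

/-- Type scheme of `foldright` (`α` is `tvar 1`, `β` is `tvar 0`). -/
def foldTy (Δ Δ' : Finset ExnName) : Ty :=
  Ty.all (Ty.all (Ty.arrow (Ty.union (tvar 1) Δ)
    (Ty.arrow (Ty.arrow (Ty.corrupt Δ (tvar 0))
        (Ty.arrow (Ty.corrupt Δ (Ty.list (tvar 0)))
          (Ty.arrow (Ty.union (tvar 1) Δ) (Ty.union (tvar 1) Δ))))
      (Ty.arrow (Ty.union (Ty.corrupt Δ (Ty.list (tvar 0))) Δ')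
        (Ty.union (tvar 1) (Δ ∪ Δ'))))))

/-- The typing judgment `Γ ⊢ M : A` of Fx (contexts are lists of types,
de Bruijn style; the `gen` rule shifts the type variables of the context,
which expresses `α ∉ FV(Γ)`). -/
inductive HasTy : List Ty → Tm → Ty → Prop
  | ax {Γ x A} : Γ[x]? = some A → HasTy Γ (Tm.var x) A
  | abs {Γ M A B} : HasTy (A :: Γ) M B → HasTy Γ (Tm.lam M) (Ty.arrow A B)
  | app {Γ M N A B} : HasTy Γ M (Ty.arrow A B) → HasTy Γ N A → HasTy Γ (Tm.app M N) B
  | gen {Γ M A} : HasTy (Γ.map (Ty.lift 0)) M A → HasTy Γ M (Ty.all A)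
  | subs {Γ M A B} : HasTy Γ M A → Subty A B → HasTy Γ M B
  | zero {Γ} : HasTy Γ Tm.zero Ty.nat
  | succ {Γ} : HasTy Γ Tm.succ (Ty.arrow Ty.nat Ty.nat)
  | natrec {Γ} (Δ Δ' : Finset ExnName) : HasTy Γ Tm.natrec (recTy Δ Δ')
  | nil {Γ} : HasTy Γ Tm.nil (Ty.all (Ty.list (tvar 0)))
  | cons {Γ} : HasTy Γ Tm.cons
      (Ty.all (Ty.arrow (tvar 0) (Ty.arrow (Ty.list (tvar 0)) (Ty.list (tvar 0)))))
  | foldr {Γ} (Δ Δ' : Finset ExnName) : HasTy Γ Tm.foldr (foldTy Δ Δ')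
  | raise {Γ} (e : ExnName) : HasTy Γ (Tm.raise e) (Ty.all (Ty.union (tvar 0) {e}))
  | tryc {Γ M N A} (e : ExnName) : HasTy Γ M (Ty.union A {e}) → HasTy Γ N A →
      HasTy Γ (Tm.tryc M e N) A


lemma subst_tvar_lift (X : Ty) : ∀ k, Ty.subst k (tvar k) (Ty.lift (k+1) X) = X := by
  induction X with
  | tvar i =>
    intro k
    simp only [Ty.lift]
    split_ifs with h
    · simp only [Ty.subst]
      split_ifs <;> first | rfl | omega | simp_all
    · simp only [Ty.subst]
      split_ifs <;> first | rfl | omega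
  | nat => intro k; rfl
  | list A ih => intro k; simp [Ty.lift, Ty.subst, ih]
  | arrow A B ihA ihB => intro k; simp [Ty.lift, Ty.subst, ihA, ihB]
  | all A ih =>
    intro k
    simp only [Ty.lift, Ty.subst]
    rw [if_neg (Nat.not_lt_zero k), ih (k+1)]
  | union A Δ ih => intro k; simp [Ty.lift, Ty.subst, ih]
  | corrupt Δ A ih => intro k; simp [Ty.lift, Ty.subst, ih]

lemma subty_all_arrow (C A : Ty) :
    Subty (Ty.all (Ty.arrow C A)) (Ty.arrow (Ty.all C) (Ty.all A)) := by
  refine Subty.trans (Subty.gen ?_) (Subty.distr (Ty.all C) A)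
  have h1 : Subty (Ty.lift 0 (Ty.all (Ty.arrow C A))) (Ty.arrow C A) := by
    have := Subty.inst (Ty.arrow (Ty.lift 1 C) (Ty.lift 1 A)) (tvar 0)
    simp only [Ty.subst, subst_tvar_lift] at this
    exact this
  have h2 : Subty (Ty.lift 0 (Ty.all C)) C := by
    have := Subty.inst (Ty.lift 1 C) (tvar 0)
    rw [subst_tvar_lift] at this
    exact this
  exact Subty.trans h1 (Subty.arrow h2 (Subty.refl A))

/-- Inversion of application typing. -/
theorem app_typing_inversion {Γ : List Ty} {M N : Tm} {A : Ty}
    (h : HasTy Γ (Tm.app M N) A) :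
    ∃ C : Ty, HasTy Γ M (Ty.arrow C A) ∧ HasTy Γ N C := by
  generalize hP : Tm.app M N = P at h
  induction h generalizing M N with
  | ax _ => exact absurd hP (by simp)
  | abs _ => exact absurd hP (by simp)
  | app hM hN _ _ =>
    obtain ⟨rfl, rfl⟩ : _ ∧ _ := by injection hP with h1 h2; exact ⟨h1, h2⟩
    exact ⟨_, hM, hN⟩
  | gen _ ih =>
    obtain ⟨C, hM, hN⟩ := ih hP
    exact ⟨Ty.all C, HasTy.subs (HasTy.gen hM) (subty_all_arrow C _), HasTy.gen hN⟩
  | subs _ hsub ih =>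
    obtain ⟨C, hM, hN⟩ := ih hP
    exact ⟨C, HasTy.subs hM (Subty.arrow (Subty.refl C) hsub), hN⟩
  | zero => exact absurd hP (by simp)
  | succ => exact absurd hP (by simp)
  | natrec => exact absurd hP (by simp)
  | nil => exact absurd hP (by simp)
  | cons => exact absurd hP (by simp)
  | foldr => exact absurd hP (by simp)
  | raise => exact absurd hP (by simp)
  | tryc => exact absurd hP (by simp)
end

section
/- Inversion of try typing in Fx: if Γ ⊢ (try M with ε ↦ N) : A, then Γ ⊢ M : A∪{ε} and Γ ⊢ N : A. -/
open Tm

open Ty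

open Ty

/-- Inversion of try typing. -/
theorem try_typing_inversion {Γ : List Ty} {M N : Tm} {e : ExnName} {A : Ty}
    (h : HasTy Γ (Tm.tryc M e N) A) :
    HasTy Γ M (Ty.union A {e}) ∧ HasTy Γ N A := by
  generalize hP : Tm.tryc M e N = P at h
  induction h generalizing M N e
  case tryc e' hM hN _ _ =>
    obtain ⟨rfl, rfl, rfl⟩ : _ ∧ _ ∧ _ := by injection hP with h1 h2 h3; exact ⟨h1, h2, h3⟩
    exact ⟨hM, hN⟩
  case subs hMA hsub ih =>
    obtain ⟨h1, h2⟩ := ih hP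
    exact ⟨HasTy.subs h1 (Subty.uctx _ hsub), HasTy.subs h2 hsub⟩
  case gen h ih =>
    obtain ⟨h1, h2⟩ := ih hP
    exact ⟨HasTy.subs (HasTy.gen h1) (Subty.fallu _ _), HasTy.gen h2⟩
  all_goals cases hP
end
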